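/- (Gallagher's lemma) If 0 < W < V - 2 and g : [W, V] → ℂ is continuously differentiable, then ∑_{W+1 ≤ n ≤ V-1} |g(n)|² ≪ ∫_W^V |g(t)|² dt + ( ∫_W^V |g(t)|² dt · ∫_W^V |g'(t)|² dt )^{1/2}, where the sum is over integers n in [W+1, V-1] and the implied constant is absolute. -/

import Mathlib

open MeasureTheory Finset Set intervalIntegral

namespace GallagherAux

noncomputable def Fh (g : ℝ → ℂ) (t : ℝ) : ℝ := ‖g t‖ ^ 2
noncomputable def Ph (g : ℝ → ℂ) (t : ℝ) : ℝ :=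
  2 * ‖g t‖ * ‖deriv g t‖
noncomputable def Dh (g : ℝ → ℂ) (t : ℝ) : ℝ :=
  2 * ((g t).re * (deriv g t).re + (g t).im * (deriv g t).im)
noncomputable def fh (g : ℝ → ℂ) (t : ℝ) : ℝ := Fh g t + Ph g t

variable {W V : ℝ} {g : ℝ → ℂ}

lemma Fh_nonneg (g : ℝ → ℂ) (t : ℝ) : 0 ≤ Fh g t := by unfold Fh; positivity

lemma Ph_nonneg (g : ℝ → ℂ) (t : ℝ) : 0 ≤ Ph g t := by
  unfold Ph; positivity

lemma fh_nonneg (g : ℝ → ℂ) (t : ℝ) : 0 ≤ fh g t :=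
  add_nonneg (Fh_nonneg g t) (Ph_nonneg g t)

lemma Dh_le_Ph (g : ℝ → ℂ) (t : ℝ) : |Dh g t| ≤ Ph g t := by
  have h1 : ‖g t‖ ^ 2 = (g t).re ^ 2 + (g t).im ^ 2 := by
    rw [Complex.sq_norm, Complex.normSq_apply]; ring
  have h2 : ‖deriv g t‖ ^ 2 = (deriv g t).re ^ 2 + (deriv g t).im ^ 2 := by
    rw [Complex.sq_norm, Complex.normSq_apply]; ring
  have hkey : (Dh g t) ^ 2 ≤ (Ph g t) ^ 2 := by
    have hs : ((g t).re * (deriv g t).re + (g t).im * (deriv g t).im) ^ 2 ≤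
        ((g t).re ^ 2 + (g t).im ^ 2) * ((deriv g t).re ^ 2 + (deriv g t).im ^ 2) := by
      nlinarith [sq_nonneg ((g t).re * (deriv g t).im - (g t).im * (deriv g t).re)]
    have hP : (Ph g t) ^ 2 = 4 * (((g t).re ^ 2 + (g t).im ^ 2) *
        ((deriv g t).re ^ 2 + (deriv g t).im ^ 2)) := by
      unfold Ph; rw [show (2 * ‖g t‖ * ‖deriv g t‖) ^ 2
        = 4 * (‖g t‖ ^ 2 * ‖deriv g t‖ ^ 2) by ring, h1, h2]
    unfold Dh
    nlinarith [hs]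
  calc |Dh g t| = Real.sqrt ((Dh g t) ^ 2) := (Real.sqrt_sq_eq_abs _).symm
    _ ≤ Real.sqrt ((Ph g t) ^ 2) := Real.sqrt_le_sqrt hkey
    _ = Ph g t := Real.sqrt_sq (Ph_nonneg g t)

lemma hasDerivAt_g (hg : ContDiffOn ℝ 1 g (Set.Icc W V)) {t : ℝ} (ht : t ∈ Set.Ioo W V) :
    HasDerivAt g (deriv g t) t := by
  have hd : DifferentiableAt ℝ g t :=
    (hg.differentiableOn one_ne_zero t (Set.Ioo_subset_Icc_self ht)).differentiableAt
      (Icc_mem_nhds ht.1 ht.2)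
  exact hd.hasDerivAt

lemma contOn_deriv (hV : W < V) (hg : ContDiffOn ℝ 1 g (Set.Icc W V)) :
    ContinuousOn (deriv g) (Set.Ioo W V) := by
  have hdwc : ContinuousOn (derivWithin g (Set.Icc W V)) (Set.Icc W V) :=
    (hg.derivWithin (m := 0) (uniqueDiffOn_Icc hV) (by norm_num)).continuousOn
  refine (hdwc.mono Set.Ioo_subset_Icc_self).congr ?_
  intro t ht
  exact (derivWithin_of_mem_nhds (Icc_mem_nhds ht.1 ht.2)).symm

lemma hasDerivAt_Fh (hg : ContDiffOn ℝ 1 g (Set.Icc W V)) {t : ℝ} (ht : t ∈ Set.Ioo W V) :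
    HasDerivAt (Fh g) (Dh g t) t := by
  have hg' := hasDerivAt_g hg ht
  have hre : HasDerivAt (fun s => (g s).re) ((deriv g t).re) t :=
    Complex.reCLM.hasFDerivAt.comp_hasDerivAt t hg'
  have him : HasDerivAt (fun s => (g s).im) ((deriv g t).im) t :=
    Complex.imCLM.hasFDerivAt.comp_hasDerivAt t hg'
  have h1 : HasDerivAt (fun s => (g s).re * (g s).re + (g s).im * (g s).im)
      ((deriv g t).re * (g t).re + (g t).re * (deriv g t).re +
        ((deriv g t).im * (g t).im + (g t).im * (deriv g t).im)) t :=
    (hre.mul hre).add (him.mul him)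
  have heq : Fh g = fun s => (g s).re * (g s).re + (g s).im * (g s).im := by
    funext s; unfold Fh; rw [Complex.sq_norm, Complex.normSq_apply]
  rw [heq]
  convert h1 using 1
  unfold Dh; ring

lemma contOn_Fh (hg : ContDiffOn ℝ 1 g (Set.Icc W V)) :
    ContinuousOn (Fh g) (Set.Icc W V) := by
  exact (continuous_norm.comp_continuousOn hg.continuousOn).pow 2

lemma contOn_Ph (hV : W < V) (hg : ContDiffOn ℝ 1 g (Set.Icc W V)) :
    ContinuousOn (Ph g) (Set.Ioo W V) := by
  have h1 : ContinuousOn (fun t => ‖g t‖) (Set.Ioo W V) :=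
    continuous_norm.comp_continuousOn (hg.continuousOn.mono Set.Ioo_subset_Icc_self)
  have h2 : ContinuousOn (fun t => ‖deriv g t‖) (Set.Ioo W V) :=
    continuous_norm.comp_continuousOn (contOn_deriv hV hg)
  exact (continuousOn_const.mul h1).mul h2

lemma contOn_Dh (hV : W < V) (hg : ContDiffOn ℝ 1 g (Set.Icc W V)) :
    ContinuousOn (Dh g) (Set.Ioo W V) := by
  have hgc := hg.continuousOn.mono Set.Ioo_subset_Icc_self
  have hdc := contOn_deriv hV hg
  exact continuousOn_const.mul
    (((Complex.continuous_re.comp_continuousOn hgc).mul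
        (Complex.continuous_re.comp_continuousOn hdc)).add
      ((Complex.continuous_im.comp_continuousOn hgc).mul
        (Complex.continuous_im.comp_continuousOn hdc)))

lemma contOn_fh (hV : W < V) (hg : ContDiffOn ℝ 1 g (Set.Icc W V)) :
    ContinuousOn (fh g) (Set.Ioo W V) :=
  ((contOn_Fh hg).mono Set.Ioo_subset_Icc_self).add (contOn_Ph hV hg)


lemma key (hV : W < V) (hg : ContDiffOn ℝ 1 g (Set.Icc W V))
    (n : ℝ) (hn1 : W + 1 ≤ n) (hn2 : n ≤ V - 1) :
    Fh g n ≤ ∫ t in (n - 1/2)..(n + 1/2), fh g t := by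
  set A := n - 1/2 with hA
  set B := n + 1/2 with hB
  have hAB : A ≤ B := by rw [hA, hB]; linarith
  have hsubIcc : Set.Icc A B ⊆ Set.Ioo W V := by
    intro x hx
    exact ⟨by rw [hA] at hx; linarith [hx.1], by rw [hB] at hx; linarith [hx.2]⟩
  have hnA : A ≤ n := by rw [hA]; linarith
  have hnB : n ≤ B := by rw [hB]; linarith
  have hii : ∀ (E : ℝ → ℝ), ContinuousOn E (Set.Ioo W V) → ∀ p q : ℝ,
      A ≤ p → p ≤ q → q ≤ B → IntervalIntegrable E volume p q := by
    intro E hE p q hp hpq hq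
    refine (hE.mono (Set.Subset.trans ?_ hsubIcc)).intervalIntegrable
    exact Set.uIcc_subset_Icc ⟨hp, hpq.trans hq⟩ ⟨hp.trans hpq, hq⟩
  -- monotone bound against ∫ Ph over [A,B]
  have hmono : ∀ (E : ℝ → ℝ), ContinuousOn E (Set.Ioo W V) → (∀ s, E s ≤ Ph g s) →
      ∀ p q : ℝ, A ≤ p → p ≤ q → q ≤ B →
        (∫ s in p..q, E s) ≤ ∫ s in A..B, Ph g s := by
    intro E hE hEP p q hp hpq hq
    calc (∫ s in p..q, E s) ≤ ∫ s in p..q, Ph g s :=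
          intervalIntegral.integral_mono_on hpq (hii E hE p q hp hpq hq)
            (hii (Ph g) (contOn_Ph hV hg) p q hp hpq hq) (fun x _ => hEP x)
      _ ≤ ∫ s in A..B, Ph g s :=
          intervalIntegral.integral_mono_interval hp hpq hq
            (Filter.Eventually.of_forall (Ph_nonneg g))
            (hii (Ph g) (contOn_Ph hV hg) A B le_rfl hAB le_rfl)
  -- pointwise claim
  have claim1 : ∀ t ∈ Set.Icc A B, Fh g n - (∫ s in A..B, Ph g s) ≤ Fh g t := by
    intro t ht
    rcases le_total t n with hc | hc
    · have hftc : (∫ s in t..n, Dh g s) = Fh g n - Fh g t := by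
        refine intervalIntegral.integral_eq_sub_of_hasDerivAt (fun x hx => ?_)
          (hii (Dh g) (contOn_Dh hV hg) t n ht.1 hc hnB)
        rw [Set.uIcc_of_le hc] at hx
        exact hasDerivAt_Fh hg (hsubIcc ⟨le_trans ht.1 hx.1, le_trans hx.2 hnB⟩)
      have := hmono (Dh g) (contOn_Dh hV hg)
        (fun s => le_trans (le_abs_self _) (Dh_le_Ph g s)) t n ht.1 hc hnB
      linarith [hftc ▸ this]
    · have hftc : (∫ s in n..t, Dh g s) = Fh g t - Fh g n := by
        refine intervalIntegral.integral_eq_sub_of_hasDerivAt (fun x hx => ?_)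
          (hii (Dh g) (contOn_Dh hV hg) n t hnA hc ht.2)
        rw [Set.uIcc_of_le hc] at hx
        exact hasDerivAt_Fh hg (hsubIcc ⟨le_trans hnA hx.1, le_trans hx.2 ht.2⟩)
      have hneg := hmono (fun s => -Dh g s) (contOn_Dh hV hg).neg
        (fun s => le_trans (neg_le_abs _) (Dh_le_Ph g s)) n t hnA hc ht.2
      rw [intervalIntegral.integral_neg] at hneg
      linarith [hftc ▸ hneg]
  -- integrate the claim over [A,B]
  have c1 : (∫ _ in A..B, (Fh g n - ∫ s in A..B, Ph g s)) ≤ ∫ t in A..B, Fh g t :=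
    intervalIntegral.integral_mono_on hAB intervalIntegrable_const
      (hii (Fh g) ((contOn_Fh hg).mono Set.Ioo_subset_Icc_self) A B le_rfl hAB le_rfl)
      claim1
  rw [intervalIntegral.integral_const, smul_eq_mul] at c1
  have hBA : B - A = 1 := by rw [hA, hB]; ring
  rw [hBA, one_mul] at c1
  have c3 : (∫ t in A..B, fh g t) = (∫ t in A..B, Fh g t) + ∫ t in A..B, Ph g t := by
    unfold fh
    exact intervalIntegral.integral_add
      (hii (Fh g) ((contOn_Fh hg).mono Set.Ioo_subset_Icc_self) A B le_rfl hAB le_rfl)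
      (hii (Ph g) (contOn_Ph hV hg) A B le_rfl hAB le_rfl)
  linarith

lemma intervalIntegrable_of_eq_on_Ioo {E E' : ℝ → ℝ} (hV : W ≤ V)
    (hE' : IntervalIntegrable E' volume W V)
    (heq : ∀ t ∈ Set.Ioo W V, E' t = E t) :
    IntervalIntegrable E volume W V := by
  rw [intervalIntegrable_iff_integrableOn_Ioo_of_le hV] at hE' ⊢
  refine hE'.congr ?_
  filter_upwards [ae_restrict_mem measurableSet_Ioo] with t ht using heq t ht

lemma Fh_intervalIntegrable (hV : W ≤ V) (hg : ContDiffOn ℝ 1 g (Set.Icc W V)) :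
    IntervalIntegrable (Fh g) volume W V := by
  refine (contOn_Fh hg).mono ?_ |>.intervalIntegrable
  rw [Set.uIcc_of_le hV]

lemma Ph_intervalIntegrable (hV : W < V) (hg : ContDiffOn ℝ 1 g (Set.Icc W V)) :
    IntervalIntegrable (Ph g) volume W V := by
  have hdwc : ContinuousOn (derivWithin g (Set.Icc W V)) (Set.Icc W V) :=
    (hg.derivWithin (m := 0) (uniqueDiffOn_Icc hV) (by norm_num)).continuousOn
  have hc : ContinuousOn
      (fun t => 2 * ‖g t‖ * ‖derivWithin g (Set.Icc W V) t‖)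
      (Set.Icc W V) :=
    (continuousOn_const.mul
      (continuous_norm.comp_continuousOn hg.continuousOn)).mul
      (continuous_norm.comp_continuousOn hdwc)
  refine intervalIntegrable_of_eq_on_Ioo hV.le (hc.mono ?_ |>.intervalIntegrable) ?_
  · rw [Set.uIcc_of_le hV.le]
  · intro t ht
    unfold Ph
    rw [derivWithin_of_mem_nhds (Icc_mem_nhds ht.1 ht.2)]

lemma derivsq_intervalIntegrable (hV : W < V) (hg : ContDiffOn ℝ 1 g (Set.Icc W V)) :
    IntervalIntegrable (fun t => ‖deriv g t‖ ^ 2) volume W V := by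
  have hdwc : ContinuousOn (derivWithin g (Set.Icc W V)) (Set.Icc W V) :=
    (hg.derivWithin (m := 0) (uniqueDiffOn_Icc hV) (by norm_num)).continuousOn
  have hc : ContinuousOn
      (fun t => ‖derivWithin g (Set.Icc W V) t‖ ^ 2) (Set.Icc W V) :=
    (continuous_norm.comp_continuousOn hdwc).pow 2
  refine intervalIntegrable_of_eq_on_Ioo hV.le (hc.mono ?_ |>.intervalIntegrable) ?_
  · rw [Set.uIcc_of_le hV.le]
  · intro t ht
    rw [derivWithin_of_mem_nhds (Icc_mem_nhds ht.1 ht.2)]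

lemma CS (hV : W < V) (hg : ContDiffOn ℝ 1 g (Set.Icc W V)) :
    (∫ t in W..V, Ph g t) ≤
      2 * Real.sqrt ((∫ t in W..V, Fh g t) *
        (∫ t in W..V, ‖deriv g t‖ ^ 2)) := by
  have hV' : W ≤ V := hV.le
  set μ := volume.restrict (Set.Ioc W V) with hμ
  have hmg : AEStronglyMeasurable (fun t => ‖g t‖) μ :=
    ((continuous_norm.comp_continuousOn
      (hg.continuousOn.mono Set.Ioc_subset_Icc_self)).aestronglyMeasurable
        measurableSet_Ioc)
  have hmg' : AEStronglyMeasurable (fun t => ‖deriv g t‖) μ := by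
    have : (fun t => ‖deriv g t‖) = fun t => ‖deriv g t‖ := by
      rfl
    rw [this]
    exact ((measurable_deriv g).norm).aestronglyMeasurable
  have hint1 : Integrable (fun t => ‖g t‖ ^ 2) μ :=
    (Fh_intervalIntegrable hV' hg).1
  have hint2 : Integrable (fun t => ‖deriv g t‖ ^ 2) μ :=
    (derivsq_intervalIntegrable hV hg).1
  have hL1 : MemLp (fun t => ‖g t‖) (ENNReal.ofReal 2) μ := by
    rw [show ENNReal.ofReal (2:ℝ) = 2 by norm_num]
    exact (memLp_two_iff_integrable_sq hmg).mpr hint1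
  have hL2 : MemLp (fun t => ‖deriv g t‖) (ENNReal.ofReal 2) μ := by
    rw [show ENNReal.ofReal (2:ℝ) = 2 by norm_num]
    exact (memLp_two_iff_integrable_sq hmg').mpr hint2
  have hpq : (2:ℝ).HolderConjugate 2 := Real.HolderConjugate.two_two
  have H := integral_mul_le_Lp_mul_Lq_of_nonneg hpq
    (Filter.Eventually.of_forall fun t => norm_nonneg _)
    (Filter.Eventually.of_forall fun t => norm_nonneg _) hL1 hL2
  have e2 : ∀ F : ℝ → ℝ, (∫ a, F a ^ (2:ℝ) ∂μ) = ∫ a, F a ^ 2 ∂μ := by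
    intro F
    refine integral_congr_ae (Filter.Eventually.of_forall fun a => ?_)
    show F a ^ (2:ℝ) = F a ^ (2:ℕ)
    rw [show (2:ℝ) = ((2:ℕ):ℝ) by norm_num, Real.rpow_natCast]
  rw [e2, e2] at H
  have hI1 : 0 ≤ ∫ a, ‖g a‖ ^ 2 ∂μ :=
    integral_nonneg fun a => by positivity
  have hI2 : 0 ≤ ∫ a, ‖deriv g a‖ ^ 2 ∂μ :=
    integral_nonneg fun a => by positivity
  have e3 : ∀ X : ℝ, 0 ≤ X → X ^ (1/(2:ℝ)) = Real.sqrt X := by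
    intro X hX
    rw [Real.sqrt_eq_rpow]
  rw [e3 _ hI1, e3 _ hI2] at H
  have hPh : (∫ t in W..V, Ph g t)
      = 2 * ∫ a, ‖g a‖ * ‖deriv g a‖ ∂μ := by
    rw [intervalIntegral.integral_of_le hV']
    rw [← MeasureTheory.integral_const_mul]
    refine integral_congr_ae (Filter.Eventually.of_forall fun a => ?_)
    unfold Ph; ring
  have hFeq : (∫ t in W..V, Fh g t) = ∫ a, ‖g a‖ ^ 2 ∂μ := by
    rw [intervalIntegral.integral_of_le hV']; rfl
  have hGeq : (∫ t in W..V, ‖deriv g t‖ ^ 2)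
      = ∫ a, ‖deriv g a‖ ^ 2 ∂μ := by
    rw [intervalIntegral.integral_of_le hV']
  rw [hPh, hFeq, hGeq, Real.sqrt_mul hI1]
  linarith

lemma sumlem (hWV : W < V - 2) (hg : ContDiffOn ℝ 1 g (Set.Icc W V)) :
    ∀ M : ℤ, ⌈W + 1⌉ ≤ M → ((M:ℝ) ≤ V - 1 →
      ∑ n ∈ Finset.Icc ⌈W + 1⌉ M, Fh g n ≤
        ∫ t in ((⌈W + 1⌉:ℝ) - 1/2)..((M:ℝ) + 1/2), fh g t) := by
  have hV : W < V := by linarith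
  have hm : (W + 1 : ℝ) ≤ (⌈W + 1⌉ : ℝ) := Int.le_ceil _
  refine Int.le_induction ?_ ?_
  · intro hMV
    rw [Finset.Icc_self, Finset.sum_singleton]
    exact key hV hg _ hm hMV
  · intro n hn IH hyp
    have hnc : ((⌈W + 1⌉ : ℤ) : ℝ) ≤ (n : ℝ) := by exact_mod_cast hn
    have hn1 : (W + 1 : ℝ) ≤ (n : ℝ) := le_trans hm hnc
    have hyp' : ((n : ℝ) + 1) ≤ V - 1 := by push_cast at hyp; linarith
    have hIH := IH (by linarith)
    have hins : Finset.Icc ⌈W + 1⌉ (n + 1) = insert (n + 1) (Finset.Icc ⌈W + 1⌉ n) := by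
      ext x; simp only [Finset.mem_Icc, Finset.mem_insert]; omega
    rw [hins, Finset.sum_insert (by simp only [Finset.mem_Icc]; omega)]
    have hkey' : Fh g ((n : ℝ) + 1) ≤ ∫ t in ((n:ℝ) + 1/2)..((n:ℝ) + 1 + 1/2), fh g t := by
      rw [show (n:ℝ) + 1/2 = ((n:ℝ) + 1) - 1/2 by ring]
      exact key hV hg _ (by linarith) hyp'
    have hint : ∀ p q : ℝ, W + 1/2 ≤ p → p ≤ q → q ≤ V - 1/2 →
        IntervalIntegrable (fh g) volume p q := by
      intro p q hp hpq hq
      refine ((contOn_fh hV hg).mono ?_).intervalIntegrable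
      rw [Set.uIcc_of_le hpq]
      intro x hx
      exact ⟨by linarith [hx.1], by linarith [hx.2]⟩
    have hadd := intervalIntegral.integral_add_adjacent_intervals
      (hint ((⌈W + 1⌉:ℝ) - 1/2) ((n:ℝ) + 1/2) (by linarith) (by linarith) (by linarith))
      (hint ((n:ℝ) + 1/2) ((n:ℝ) + 1 + 1/2) (by linarith) (by linarith) (by linarith))
      (f := fh g)
    push_cast
    linarith [hIH, hkey', hadd]

end GallagherAux

open GallagherAux in
/-- Gallagher's lemma: if `0 < W < V - 2` and `g : [W, V] → ℂ` is continuously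
differentiable, then
`∑_{W+1 ≤ n ≤ V-1} |g(n)|² ≪ ∫_W^V |g|² + (∫_W^V |g|² · ∫_W^V |g'|²)^{1/2}`,
with an absolute implied constant. -/
theorem gallagher_lemma :
    ∃ C : ℝ, 0 < C ∧ ∀ (W V : ℝ) (g : ℝ → ℂ),
      0 < W → W < V - 2 →
      ContDiffOn ℝ 1 g (Set.Icc W V) →
      ∑ n ∈ Finset.Icc ⌈W + 1⌉ ⌊V - 1⌋, ‖g n‖ ^ 2 ≤
        C * ((∫ t in W..V, ‖g t‖ ^ 2) +
          Real.sqrt ((∫ t in W..V, ‖g t‖ ^ 2) *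
            (∫ t in W..V, ‖deriv g t‖ ^ 2))) := by
  refine ⟨2, by norm_num, ?_⟩
  intro W V g hW hWV hg
  have hV : W < V := by linarith
  have hsumeq : ∑ n ∈ Finset.Icc ⌈W + 1⌉ ⌊V - 1⌋, ‖g n‖ ^ 2
      = ∑ n ∈ Finset.Icc ⌈W + 1⌉ ⌊V - 1⌋, Fh g n := rfl
  have hFeq : (∫ t in W..V, ‖g t‖ ^ 2) = ∫ t in W..V, Fh g t := rfl
  have hI1nn : 0 ≤ ∫ t in W..V, ‖g t‖ ^ 2 :=
    intervalIntegral.integral_nonneg (by linarith) (fun u _ => by positivity)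
  have hsqnn : 0 ≤ Real.sqrt ((∫ t in W..V, ‖g t‖ ^ 2) *
      (∫ t in W..V, ‖deriv g t‖ ^ 2)) := Real.sqrt_nonneg _
  by_cases hcase : ⌈W + 1⌉ ≤ ⌊V - 1⌋
  · have hmR : (W + 1 : ℝ) ≤ (⌈W + 1⌉ : ℝ) := Int.le_ceil _
    have hMR : ((⌊V - 1⌋ : ℤ) : ℝ) ≤ V - 1 := Int.floor_le _
    have hmM : ((⌈W + 1⌉ : ℤ) : ℝ) ≤ ((⌊V - 1⌋ : ℤ) : ℝ) := by exact_mod_cast hcase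
    have S := sumlem hWV hg ⌊V - 1⌋ hcase hMR
    have hext : (∫ t in ((⌈W + 1⌉:ℝ) - 1/2)..((⌊V - 1⌋:ℝ) + 1/2), fh g t)
        ≤ ∫ t in W..V, fh g t :=
      intervalIntegral.integral_mono_interval (by linarith) (by linarith) (by linarith)
        (Filter.Eventually.of_forall (fh_nonneg g))
        ((Fh_intervalIntegrable hV.le hg).add (Ph_intervalIntegrable hV hg))
    have hsplit : (∫ t in W..V, fh g t)
        = (∫ t in W..V, Fh g t) + ∫ t in W..V, Ph g t := by
      unfold fh
      exact intervalIntegral.integral_add (Fh_intervalIntegrable hV.le hg)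
        (Ph_intervalIntegrable hV hg)
    have hcs := CS hV hg
    rw [hsumeq, hFeq] at *
    linarith [S, hext, hsplit, hcs]
  · rw [Finset.Icc_eq_empty hcase, Finset.sum_empty]
    linarith
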